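/- arXiv:2008.12171 — 3 statements merged into one kernel-verified Lean document; each statement's English description precedes it below -/
import Mathlib

section
/- Let q ∈ ℍ be written q = a + b with a = x₁ + i x₂ ∈ ℍ_{1,i} and b = j x₃ + k x₄ ∈ ℍ_{j,k} (x₁,…,x₄ ∈ ℝ), and suppose a ≠ 0 and b ≠ 0 (equivalently q ∉ ℍ_{1,i} ∪ ℍ_{j,k}). Then the convex cone in the real vector space ℍ generated by the set {exp(t i) · q · exp(−s i) : t, s ∈ ℝ} is all of ℍ. -/
open Quaternion

noncomputable section

def qi : ℍ[ℝ] := ⟨0, 1, 0, 0⟩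
def qj : ℍ[ℝ] := ⟨0, 0, 1, 0⟩
def qk : ℍ[ℝ] := ⟨0, 0, 0, 1⟩

/-- the real subspace `ℍ_{1,i}` of `ℍ` spanned by `{1, i}` -/
def H1i : Submodule ℝ ℍ[ℝ] := Submodule.span ℝ {1, qi}

/-- the real subspace `ℍ_{j,k}` of `ℍ` spanned by `{j, k}` -/
def Hjk : Submodule ℝ ℍ[ℝ] := Submodule.span ℝ {qj, qk}

/-- the quaternionic exponential `exp (t i) = cos t + (sin t) i` -/
noncomputable def qexp (t : ℝ) : ℍ[ℝ] := NormedSpace.exp (t • qi)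

/-- the smallest convex cone in `ℍ` (as a real vector space) containing `S`:
the intersection of all convex cones containing `S`. -/
def coneGen (S : Set ℍ[ℝ]) : Set ℍ[ℝ] :=
  ⋂ K ∈ {K : ConvexCone ℝ ℍ[ℝ] | S ⊆ ↑K}, (K : Set ℍ[ℝ])

namespace Stmt5Aux

def E (t : ℝ) : ℍ[ℝ] := ⟨Real.cos t, Real.sin t, 0, 0⟩

@[simp] lemma E_re (t : ℝ) : (E t).re = Real.cos t := rfl
@[simp] lemma E_imI (t : ℝ) : (E t).imI = Real.sin t := rfl
@[simp] lemma E_imJ (t : ℝ) : (E t).imJ = 0 := rfl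
@[simp] lemma E_imK (t : ℝ) : (E t).imK = 0 := rfl
@[simp] lemma qi_re : qi.re = 0 := rfl
@[simp] lemma qi_imI : qi.imI = 1 := rfl
@[simp] lemma qi_imJ : qi.imJ = 0 := rfl
@[simp] lemma qi_imK : qi.imK = 0 := rfl
@[simp] lemma qj_re : qj.re = 0 := rfl
@[simp] lemma qj_imI : qj.imI = 0 := rfl
@[simp] lemma qk_re : qk.re = 0 := rfl
@[simp] lemma qk_imI : qk.imI = 0 := rfl

lemma qexp_eq (t : ℝ) : qexp t = E t := by
  unfold qexp E
  have hre : (t • qi).re = 0 := by simp [Quaternion.re_smul]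
  have hnorm : ‖t • qi‖ = |t| := by
    rw [norm_smul]
    have : ‖qi‖ = 1 := by
      rw [norm_eq_sqrt_real_inner, Quaternion.inner_self, Quaternion.normSq_def']
      simp [qi, Quaternion.inner_self, Quaternion.normSq_def']
    simp [this]
  rw [Quaternion.exp_of_re_eq_zero _ hre, hnorm]
  rcases eq_or_ne t 0 with rfl | ht
  · ext <;> simp [qi]
  · have : Real.sin |t| / |t| * t = Real.sin t := by
      rcases abs_cases t with ⟨h1, h2⟩ | ⟨h1, h2⟩
      · rw [h1]; field_simp
      · rw [h1, Real.sin_neg]; field_simp [ht]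
    ext <;> simp [Real.cos_abs, this, mul_comm, Quaternion.re_smul, Quaternion.imI_smul, Quaternion.imJ_smul, Quaternion.imK_smul]

lemma mem_H1i {a : ℍ[ℝ]} (ha : a ∈ H1i) : a.imJ = 0 ∧ a.imK = 0 := by
  rw [H1i, Submodule.mem_span_pair] at ha
  obtain ⟨c, d, rfl⟩ := ha
  constructor <;> simp [Quaternion.ext_iff, Quaternion.re_smul, Quaternion.imI_smul, Quaternion.imJ_smul, Quaternion.imK_smul]

lemma mem_Hjk {b : ℍ[ℝ]} (hb : b ∈ Hjk) : b.re = 0 ∧ b.imI = 0 := by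
  rw [Hjk, Submodule.mem_span_pair] at hb
  obtain ⟨c, d, rfl⟩ := hb
  constructor <;> simp [Quaternion.ext_iff, Quaternion.re_smul, Quaternion.imI_smul, Quaternion.imJ_smul, Quaternion.imK_smul]

lemma E_mul (t s : ℝ) : E t * E s = E (t + s) := by
  ext <;> simp [E_re, E_imI, E_imJ, E_imK, Quaternion.re_mul, Quaternion.imI_mul, Quaternion.imJ_mul,
    Quaternion.imK_mul, Real.cos_add, Real.sin_add] <;> ring

lemma E_comm {a : ℍ[ℝ]} (h1 : a.imJ = 0) (h2 : a.imK = 0) (t : ℝ) : E t * a = a * E t := by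
  ext <;> simp [E_re, E_imI, E_imJ, E_imK, Quaternion.re_mul, Quaternion.imI_mul, Quaternion.imJ_mul,
    Quaternion.imK_mul, h1, h2] <;> ring

lemma E_anticomm {b : ℍ[ℝ]} (h1 : b.re = 0) (h2 : b.imI = 0) (t : ℝ) :
    E t * b = b * E (-t) := by
  ext <;> simp [E_re, E_imI, E_imJ, E_imK, Quaternion.re_mul, Quaternion.imI_mul, Quaternion.imJ_mul,
    Quaternion.imK_mul, h1, h2] <;> ring

lemma E_pi_add (t : ℝ) : E (t + Real.pi) = -E t := by
  ext <;> simp [E_re, E_imI, E_imJ, E_imK, Real.cos_add, Real.sin_add]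

lemma E_zero : E 0 = 1 := by ext <;> simp [E]

lemma orbit_eq {a b : ℍ[ℝ]} (ha1 : a.imJ = 0) (ha2 : a.imK = 0)
    (hb1 : b.re = 0) (hb2 : b.imI = 0) (t s : ℝ) :
    E t * (a + b) * E (-s) = E (t - s) * a + E (t + s) * b := by
  rw [mul_add, add_mul, E_comm ha1 ha2, E_anticomm hb1 hb2, mul_assoc, mul_assoc,
    E_mul, E_mul, show t + -s = t - s by ring, show -t + -s = -(t + s) by ring,
    ← E_anticomm hb1 hb2, ← E_comm ha1 ha2]

lemma exists_angle {A P : ℂ} (hA : A ≠ 0) (hP : P ≠ 0) :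
    ∃ c > (0:ℝ), ∃ u : ℝ,
      P.re = c * (Real.cos u * A.re - Real.sin u * A.im) ∧
      P.im = c * (Real.sin u * A.re + Real.cos u * A.im) := by
  obtain ⟨c, hc, u, h⟩ : ∃ c > (0:ℝ), ∃ u : ℝ,
      P = (c : ℂ) * Complex.exp ((u : ℝ) * Complex.I) * A := by
    refine ⟨‖P / A‖, ?_, (P / A).arg, ?_⟩
    · exact norm_pos_iff.mpr (div_ne_zero hP hA)
    · rw [Complex.norm_mul_exp_arg_mul_I, div_mul_cancel₀ _ hA]
  subst h
  refine ⟨c, hc, u, ?_, ?_⟩ <;>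
    simp [Complex.mul_re, Complex.mul_im, Complex.exp_ofReal_mul_I_re,
      Complex.exp_ofReal_mul_I_im] <;> ring

end Stmt5Aux

open Stmt5Aux
/-- if `q = a + b` with `a ∈ ℍ_{1,i} \ {0}` and `b ∈ ℍ_{j,k} \ {0}`, then the convex
cone generated by the orbit `{exp(t i) q exp(-s i) : t, s ∈ ℝ}` is all of `ℍ`. -/
theorem stmt5 (q a b : ℍ[ℝ]) (ha : a ∈ H1i) (hb : b ∈ Hjk) (ha0 : a ≠ 0) (hb0 : b ≠ 0)
    (hq : q = a + b) :
    coneGen {x : ℍ[ℝ] | ∃ t s : ℝ, x = qexp t * q * qexp (-s)} = Set.univ := by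
  obtain ⟨ha1, ha2⟩ := mem_H1i ha
  obtain ⟨hb1, hb2⟩ := mem_Hjk hb
  rw [Set.eq_univ_iff_forall]
  intro z
  rw [coneGen, Set.mem_iInter₂]
  intro K hK
  -- all orbit elements belong to K
  have hS : ∀ t s : ℝ, E t * (a + b) * E (-s) ∈ K := by
    intro t s
    have : qexp t * q * qexp (-s) ∈ K := hK ⟨t, s, rfl⟩
    rwa [hq, qexp_eq, qexp_eq] at this
  have hsum : ∀ u v : ℝ, E u * a + E v * b ∈ K := by
    intro u v
    have h := hS ((u + v) / 2) ((v - u) / 2)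
    rw [orbit_eq ha1 ha2 hb1 hb2, show (u + v) / 2 - (v - u) / 2 = u by ring,
      show (u + v) / 2 + (v - u) / 2 = v by ring] at h
    exact h
  -- E u * a ∈ K for all u
  have hA : ∀ u : ℝ, E u * a ∈ K := by
    intro u
    have h := K.add_mem (hsum u 0) (hsum u (0 + Real.pi))
    have key : (E u * a + E 0 * b) + (E u * a + E (0 + Real.pi) * b)
        = (2 : ℝ) • (E u * a) := by
      rw [E_pi_add, neg_mul, two_smul]; abel
    rw [key] at h
    have := K.smul_mem (by norm_num : (0:ℝ) < 2⁻¹) h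
    rwa [smul_smul, show (2⁻¹ : ℝ) * 2 = 1 by norm_num, one_smul] at this
  -- E v * b ∈ K for all v
  have hB : ∀ v : ℝ, E v * b ∈ K := by
    intro v
    have h := K.add_mem (hsum 0 v) (hsum (0 + Real.pi) v)
    have key : (E 0 * a + E v * b) + (E (0 + Real.pi) * a + E v * b)
        = (2 : ℝ) • (E v * b) := by
      rw [E_pi_add, neg_mul, two_smul]; abel
    rw [key] at h
    have := K.smul_mem (by norm_num : (0:ℝ) < 2⁻¹) h
    rwa [smul_smul, show (2⁻¹ : ℝ) * 2 = 1 by norm_num, one_smul] at this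
  -- 0 ∈ K
  have h0 : (0 : ℍ[ℝ]) ∈ K := by
    have h := K.add_mem (hA 0) (hA (0 + Real.pi))
    rwa [E_pi_add, neg_mul, add_neg_cancel] at h
  -- decompose z
  have hp : (⟨z.re, z.imI, 0, 0⟩ : ℍ[ℝ]) ∈ K := by
    by_cases hz : (⟨z.re, z.imI, 0, 0⟩ : ℍ[ℝ]) = 0
    · rwa [hz]
    · have hA' : (⟨a.re, a.imI⟩ : ℂ) ≠ 0 := by
        intro h
        apply ha0
        rw [Complex.ext_iff] at h
        ext <;> simp_all
      have hP' : (⟨z.re, z.imI⟩ : ℂ) ≠ 0 := by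
        intro h
        apply hz
        rw [Complex.ext_iff] at h
        ext <;> simp_all
      obtain ⟨c, hc, u, h1, h2⟩ := exists_angle hA' hP'
      simp only at h1 h2
      have : (⟨z.re, z.imI, 0, 0⟩ : ℍ[ℝ]) = c • (E u * a) := by
        ext <;> simp [E_re, E_imI, E_imJ, E_imK, Quaternion.re_mul, Quaternion.imI_mul, Quaternion.imJ_mul,
          Quaternion.imK_mul, ha1, ha2, h1, h2] <;> (ring_nf; try tauto)
      rw [this]
      exact K.smul_mem hc (hA u)
  have hr : (⟨0, 0, z.imJ, z.imK⟩ : ℍ[ℝ]) ∈ K := by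
    by_cases hz : (⟨0, 0, z.imJ, z.imK⟩ : ℍ[ℝ]) = 0
    · rwa [hz]
    · have hB' : (⟨b.imJ, b.imK⟩ : ℂ) ≠ 0 := by
        intro h
        apply hb0
        rw [Complex.ext_iff] at h
        ext <;> simp_all
      have hP' : (⟨z.imJ, z.imK⟩ : ℂ) ≠ 0 := by
        intro h
        apply hz
        rw [Complex.ext_iff] at h
        ext <;> simp_all
      obtain ⟨c, hc, u, h1, h2⟩ := exists_angle hB' hP'
      simp only at h1 h2
      have : (⟨0, 0, z.imJ, z.imK⟩ : ℍ[ℝ]) = c • (E u * b) := by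
        ext <;> simp [E_re, E_imI, E_imJ, E_imK, Quaternion.re_mul, Quaternion.imI_mul, Quaternion.imJ_mul,
          Quaternion.imK_mul, hb1, hb2, h1, h2] <;> (ring_nf; try tauto)
      rw [this]
      exact K.smul_mem hc (hB u)
  have hzdec : z = (⟨z.re, z.imI, 0, 0⟩ : ℍ[ℝ]) + (⟨0, 0, z.imJ, z.imK⟩ : ℍ[ℝ]) := by
    ext <;> simp
  rw [hzdec]
  exact K.add_mem hp hr
end
end

section
/- Let c₁, c₂ ∈ ℝ with c₁c₂ ≠ 0 and c₁/c₂ irrational, and let q ∈ ℍ with q ∉ ℍ_{1,i} ∪ ℍ_{j,k}. Then the closed convex cone in the real vector space ℍ generated by the curve {exp(t c₁ i) · q · exp(−t c₂ i) : t ∈ ℝ} is all of ℍ. -/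
open Quaternion

noncomputable section

open scoped RealInnerProductSpace

lemma qi_re : qi.re = 0 := rfl
lemma qi_imI : qi.imI = 1 := rfl
lemma qi_imJ : qi.imJ = 0 := rfl
lemma qi_imK : qi.imK = 0 := rfl
lemma qj_re : qj.re = 0 := rfl
lemma qj_imI : qj.imI = 0 := rfl
lemma qj_imJ : qj.imJ = 1 := rfl
lemma qj_imK : qj.imK = 0 := rfl
lemma qk_re : qk.re = 0 := rfl
lemma qk_imI : qk.imI = 0 := rfl
lemma qk_imJ : qk.imJ = 0 := rfl
lemma qk_imK : qk.imK = 1 := rfl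

lemma norm_qi : ‖qi‖ = 1 := by
  rw [norm_eq_sqrt_real_inner, Quaternion.inner_self]
  simp [qi_re, qi_imI, qi_imJ, qi_imK, Quaternion.normSq_def']

lemma qexp_eq (t : ℝ) : qexp t = ⟨Real.cos t, Real.sin t, 0, 0⟩ := by
  rcases eq_or_ne t 0 with rfl | ht
  · simp [qexp, NormedSpace.exp_zero]
    ext <;> simp
  · rw [qexp, Quaternion.exp_of_re_eq_zero]
    · have hn : ‖t • qi‖ = |t| := by rw [norm_smul, norm_qi]; simp
      rw [hn]
      ext <;> simp [qi_re, qi_imI, qi_imJ, qi_imK, Real.cos_abs]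
      · rw [div_mul_eq_mul_div]
        rcases abs_cases t with ⟨h, _⟩ | ⟨h, _⟩
        · rw [h]; field_simp
        · rw [h, Real.sin_neg]; field_simp
    · simp [qi_re, qi_imI, qi_imJ, qi_imK]

lemma curve_eq (s r : ℝ) (q : ℍ[ℝ]) : qexp s * q * qexp (-r) =
    ⟨q.re * Real.cos (s-r) - q.imI * Real.sin (s-r),
     q.imI * Real.cos (s-r) + q.re * Real.sin (s-r),
     q.imJ * Real.cos (s+r) - q.imK * Real.sin (s+r),
     q.imK * Real.cos (s+r) + q.imJ * Real.sin (s+r)⟩ := by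
  ext <;> simp only [Quaternion.re_mul, Quaternion.imI_mul, Quaternion.imJ_mul,
      Quaternion.imK_mul] <;>
    simp [qexp_eq, Quaternion.re_mul, Quaternion.imI_mul, Quaternion.imJ_mul,
      Quaternion.imK_mul, Real.cos_sub, Real.sin_sub, Real.cos_add, Real.sin_add,
      Real.cos_neg, Real.sin_neg] <;> ring

open Real in
lemma pure_sin (β : ℝ) (hβ : β ≠ 0) {R S : ℝ}
    (h : ∀ t, 0 ≤ R * Real.cos (β*t) + S * Real.sin (β*t)) : R = 0 ∧ S = 0 := by
  have key : ∀ t, R * Real.cos (β*t) + S * Real.sin (β*t) = 0 := by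
    intro t
    have h1 := h t
    have h2 := h (t + π/β)
    have e : β * (t + π/β) = β*t + π := by field_simp
    rw [e, Real.cos_add, Real.sin_add, Real.cos_pi, Real.sin_pi] at h2
    nlinarith
  have k0 := key 0
  have k1 := key (π/(2*β))
  have e : β * (π/(2*β)) = π/2 := by field_simp
  rw [e, Real.cos_pi_div_two, Real.sin_pi_div_two] at k1
  rw [mul_zero, Real.cos_zero, Real.sin_zero] at k0
  constructor <;> linarith

open Real in
lemma trig2 (α β : ℝ) (hα : α ≠ 0) (hβ : β ≠ 0) (hcos : Real.cos (β*(π/α)) ≠ -1)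
    {P Q R S : ℝ}
    (h : ∀ t, 0 ≤ P * Real.cos (α*t) + Q * Real.sin (α*t)
        + R * Real.cos (β*t) + S * Real.sin (β*t)) : R = 0 ∧ S = 0 := by
  set c := Real.cos (β*(π/α)) with hc
  set s := Real.sin (β*(π/α)) with hs
  have h' : ∀ t, 0 ≤ (R*(1+c)+S*s) * Real.cos (β*t) + (S*(1+c)-R*s) * Real.sin (β*t) := by
    intro t
    have h1 := h t
    have h2 := h (t + π/α)
    have e1 : α * (t + π/α) = α*t + π := by field_simp
    have e2 : β * (t + π/α) = β*t + β*(π/α) := by ring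
    rw [e1, e2, Real.cos_add (α*t), Real.sin_add (α*t), Real.cos_pi, Real.sin_pi,
      Real.cos_add (β*t), Real.sin_add (β*t), ← hc, ← hs] at h2
    nlinarith
  obtain ⟨e1, e2⟩ := pure_sin β hβ h'
  have hsc : s^2 + c^2 = 1 := Real.sin_sq_add_cos_sq _
  have h2c : 2*(1+c) ≠ 0 := by
    intro h0
    exact hcos (by linarith)
  constructor
  · have : R * (2*(1+c)) = 0 := by linear_combination (1+c)*e1 - s*e2 - R*hsc
    exact (mul_eq_zero.1 this).resolve_right h2c
  · have : S * (2*(1+c)) = 0 := by linear_combination s*e1 + (1+c)*e2 - S*hsc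
    exact (mul_eq_zero.1 this).resolve_right h2c

lemma mem_H1i (q : ℍ[ℝ]) : q ∈ H1i ↔ q.imJ = 0 ∧ q.imK = 0 := by
  rw [H1i, Submodule.mem_span_pair]
  constructor
  · rintro ⟨s, t, rfl⟩
    simp [qi_re, qi_imI, qi_imJ, qi_imK]
  · rintro ⟨h1, h2⟩
    exact ⟨q.re, q.imI, by ext <;> simp [qi_re, qi_imI, qi_imJ, qi_imK, h1, h2]⟩

lemma mem_Hjk (q : ℍ[ℝ]) : q ∈ Hjk ↔ q.re = 0 ∧ q.imI = 0 := by
  rw [Hjk, Submodule.mem_span_pair]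
  constructor
  · rintro ⟨s, t, rfl⟩
    simp [qj_re, qj_imI, qj_imJ, qj_imK, qk_re, qk_imI, qk_imJ, qk_imK]
  · rintro ⟨h1, h2⟩
    exact ⟨q.imJ, q.imK, by ext <;> simp [qj_re, qj_imI, qj_imJ, qj_imK, qk_re, qk_imI, qk_imJ, qk_imK, h1, h2]⟩

lemma inner_quat (x y : ℍ[ℝ]) :
    ⟪x, y⟫ = x.re*y.re + x.imI*y.imI + x.imJ*y.imJ + x.imK*y.imK := by
  simp only [Quaternion.inner_def, Quaternion.re_mul, Quaternion.re_star,
    Quaternion.imI_star, Quaternion.imJ_star, Quaternion.imK_star]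
  ring

open Real in
lemma cos_pi_ratio_ne (x y : ℝ) (hx : x ≠ 0) (hm : ∀ m : ℤ, y ≠ (m:ℝ) * x) :
    Real.cos (y * (π/x)) ≠ -1 := by
  intro hcos
  have h1 : Real.cos (y * (π/x) + π) = 1 := by
    rw [Real.cos_add, Real.cos_pi, Real.sin_pi, hcos]; ring
  obtain ⟨n, hn⟩ := (Real.cos_eq_one_iff _).1 h1
  apply hm (2*n - 1)
  have h2 : y * π = ((2*(n:ℝ)-1)) * x * π := by
    have := Real.pi_ne_zero
    field_simp at hn
    rw [show y = (2*(n:ℝ)-1)*x by linarith]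
  push_cast
  have := mul_right_cancel₀ Real.pi_ne_zero h2
  linarith [this]

lemma ratio_not_int₁ {c₁ c₂ : ℝ} (hc₂ : c₂ ≠ 0) (hirr : Irrational (c₁ / c₂)) (m : ℤ) :
    c₁ + c₂ ≠ (m:ℝ) * (c₁ - c₂) := by
  intro h
  rcases eq_or_ne m 1 with rfl | hm
  · simp only [Int.cast_one, one_mul] at h
    exact hc₂ (by linarith)
  · apply hirr
    refine ⟨(m+1)/(m-1), ?_⟩
    have hm' : (m:ℝ) - 1 ≠ 0 := sub_ne_zero.2 (by exact_mod_cast hm)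
    push_cast
    rw [div_eq_div_iff hm' hc₂]
    linarith

lemma ratio_not_int₂ {c₁ c₂ : ℝ} (hc₂ : c₂ ≠ 0) (hirr : Irrational (c₁ / c₂)) (m : ℤ) :
    c₁ - c₂ ≠ (m:ℝ) * (c₁ + c₂) := by
  intro h
  rcases eq_or_ne m 1 with rfl | hm
  · simp only [Int.cast_one, one_mul] at h
    exact hc₂ (by linarith)
  · apply hirr
    refine ⟨(m+1)/(1-m), ?_⟩
    have hm' : 1 - (m:ℝ) ≠ 0 := sub_ne_zero.2 (Ne.symm (by exact_mod_cast hm))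
    push_cast
    rw [div_eq_div_iff hm' hc₂]
    linarith

lemma mem_coneGen {S : Set ℍ[ℝ]} {x : ℍ[ℝ]} :
    x ∈ coneGen S ↔ ∀ K : ConvexCone ℝ ℍ[ℝ], S ⊆ ↑K → x ∈ K := by
  simp [coneGen, Set.mem_iInter₂, SetLike.mem_coe]

def coneGenCone (S : Set ℍ[ℝ]) : ConvexCone ℝ ℍ[ℝ] where
  carrier := coneGen S
  smul_mem' := fun c hc x hx => mem_coneGen.2 fun K hK => K.smul_mem hc (mem_coneGen.1 hx K hK)
  add_mem' := fun x hx y hy => mem_coneGen.2 fun K hK =>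
    K.add_mem (mem_coneGen.1 hx K hK) (mem_coneGen.1 hy K hK)

lemma subset_coneGen {S : Set ℍ[ℝ]} : S ⊆ coneGen S :=
  fun x hx => mem_coneGen.2 fun _ hK => hK hx

/-- if `c₁ c₂ ≠ 0`, `c₁/c₂` is irrational and `q ∉ ℍ_{1,i} ∪ ℍ_{j,k}`, then the
closed convex cone generated by the curve `{exp(t c₁ i) q exp(-t c₂ i) : t ∈ ℝ}` is all of `ℍ`. -/
theorem stmt6 (c₁ c₂ : ℝ) (hc : c₁ * c₂ ≠ 0) (hirr : Irrational (c₁ / c₂))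
    (q : ℍ[ℝ]) (hq : q ∉ (H1i : Set ℍ[ℝ]) ∪ (Hjk : Set ℍ[ℝ])) :
    closure (coneGen {x : ℍ[ℝ] | ∃ t : ℝ, x = qexp (t * c₁) * q * qexp (-(t * c₂))}) =
      Set.univ := by
  have hc₁ : c₁ ≠ 0 := fun h => hc (by simp [h])
  have hc₂ : c₂ ≠ 0 := fun h => hc (by simp [h])
  set α := c₁ - c₂ with hαdef
  set β := c₁ + c₂ with hβdef
  have hα : α ≠ 0 := by
    have := ratio_not_int₂ hc₂ hirr 0
    simpa using this
  have hβ : β ≠ 0 := by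
    have := ratio_not_int₁ hc₂ hirr 0
    simpa using this
  have hcosβα : Real.cos (β*(Real.pi/α)) ≠ -1 :=
    cos_pi_ratio_ne α β hα fun m => ratio_not_int₁ hc₂ hirr m
  have hcosαβ : Real.cos (α*(Real.pi/β)) ≠ -1 :=
    cos_pi_ratio_ne β α hβ fun m => ratio_not_int₂ hc₂ hirr m
  -- q's coordinates
  have hab : ¬(q.re = 0 ∧ q.imI = 0) := fun h => hq (Or.inr ((mem_Hjk q).2 h))
  have hcd : ¬(q.imJ = 0 ∧ q.imK = 0) := fun h => hq (Or.inl ((mem_H1i q).2 h))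
  set S : Set ℍ[ℝ] := {x : ℍ[ℝ] | ∃ t : ℝ, x = qexp (t * c₁) * q * qexp (-(t * c₂))} with hS
  by_contra hne
  obtain ⟨b, hb⟩ : ∃ b, b ∉ closure (coneGen S) := by
    by_contra h
    push_neg at h
    exact hne (Set.eq_univ_of_forall h)
  set K : ConvexCone ℝ ℍ[ℝ] := (coneGenCone S).closure with hK
  have hKcoe : (K : Set ℍ[ℝ]) = closure (coneGen S) := ConvexCone.coe_closure _
  have hne' : (K : Set ℍ[ℝ]).Nonempty := by
    rw [hKcoe]
    exact ⟨q, subset_closure (subset_coneGen ⟨0, by simp [qexp]⟩)⟩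
  have hclosed : IsClosed (K : Set ℍ[ℝ]) := by rw [hKcoe]; exact isClosed_closure
  have hbK : b ∉ K := by rwa [← SetLike.mem_coe, hKcoe]
  have h0K : (0 : ℍ[ℝ]) ∈ K := by
    obtain ⟨x, hx⟩ := hne'
    have ht : Filter.Tendsto (fun c : ℝ => c • x) (nhdsWithin 0 (Set.Ioi 0)) (nhds 0) := by
      have hc : Continuous fun c : ℝ => c • x := continuous_id.smul continuous_const
      have h2 := hc.tendsto 0
      simp only [zero_smul] at h2
      exact h2.mono_left nhdsWithin_le_nhds
    exact hclosed.mem_of_tendsto ht (eventually_nhdsWithin_of_forall fun c hc => K.smul_mem hc hx)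
  let C : ProperCone ℝ ℍ[ℝ] :=
    { carrier := K
      add_mem' := fun ha hb => K.add_mem ha hb
      zero_mem' := h0K
      smul_mem' := fun c x hx => by
        rcases c.2.eq_or_lt with h | h
        · have : c • x = 0 := by rw [show c = 0 from Subtype.ext h.symm, zero_smul]
          rw [this]; exact h0K
        · exact K.smul_mem h hx
      isClosed' := hclosed }
  obtain ⟨y, hy, hyb⟩ := C.hyperplane_separation' (x₀ := b) hbK
  -- the inequality along the curve
  have hcurve : ∀ t : ℝ, 0 ≤ (q.re*y.re + q.imI*y.imI) * Real.cos (α*t)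
      + (q.re*y.imI - q.imI*y.re) * Real.sin (α*t)
      + (q.imJ*y.imJ + q.imK*y.imK) * Real.cos (β*t)
      + (q.imJ*y.imK - q.imK*y.imJ) * Real.sin (β*t) := by
    intro t
    have hmem : qexp (t * c₁) * q * qexp (-(t * c₂)) ∈ K := by
      rw [← SetLike.mem_coe, hKcoe]
      exact subset_closure (subset_coneGen ⟨t, rfl⟩)
    have h0 := hy _ hmem
    rw [inner_quat, curve_eq] at h0
    have ea : t * c₁ - t * c₂ = α * t := by rw [hαdef]; ring
    have eb : t * c₁ + t * c₂ = β * t := by rw [hβdef]; ring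
    rw [ea, eb] at h0
    simp only at h0
    exact le_of_le_of_eq h0 (by ring)
  have h1 : q.imJ*y.imJ + q.imK*y.imK = 0 ∧ q.imJ*y.imK - q.imK*y.imJ = 0 :=
    trig2 α β hα hβ hcosβα hcurve
  have h2 : q.re*y.re + q.imI*y.imI = 0 ∧ q.re*y.imI - q.imI*y.re = 0 := by
    apply trig2 β α hβ hα hcosαβ (P := q.imJ*y.imJ + q.imK*y.imK)
      (Q := q.imJ*y.imK - q.imK*y.imJ)
    intro t
    have := hcurve t
    linarith
  obtain ⟨e1, e2⟩ := h2
  obtain ⟨e3, e4⟩ := h1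
  -- deduce y = 0
  have hab' : q.re^2 + q.imI^2 ≠ 0 := by
    intro h
    exact hab ⟨by nlinarith, by nlinarith⟩
  have hcd' : q.imJ^2 + q.imK^2 ≠ 0 := by
    intro h
    exact hcd ⟨by nlinarith, by nlinarith⟩
  have hyre : y.re = 0 := by
    have : y.re * (q.re^2 + q.imI^2) = 0 := by linear_combination q.re*e1 - q.imI*e2
    exact (mul_eq_zero.1 this).resolve_right hab'
  have hyimI : y.imI = 0 := by
    have : y.imI * (q.re^2 + q.imI^2) = 0 := by linear_combination q.imI*e1 + q.re*e2
    exact (mul_eq_zero.1 this).resolve_right hab'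
  have hyimJ : y.imJ = 0 := by
    have : y.imJ * (q.imJ^2 + q.imK^2) = 0 := by linear_combination q.imJ*e3 - q.imK*e4
    exact (mul_eq_zero.1 this).resolve_right hcd'
  have hyimK : y.imK = 0 := by
    have : y.imK * (q.imJ^2 + q.imK^2) = 0 := by linear_combination q.imK*e3 + q.imJ*e4
    exact (mul_eq_zero.1 this).resolve_right hcd'
  have hy0 : y = 0 := by ext <;> assumption
  rw [hy0] at hyb
  simp at hyb
end
end

section
/- Let A ∈ sl(n,ℍ) and let B = diag(a₁+i b₁, …, aₙ+i bₙ) ∈ sl(n,ℍ) be diagonal with aᵣ, bᵣ ∈ ℝ and a₁ > a₂ ≥ ⋯ ≥ a_{n−1} > aₙ. Let p ∈ ℍ be the (1,n) entry of A and let X = p·E_{1n} be the matrix whose (1,n) entry is p and all other entries are 0. Then there exists a sequence t_k → +∞ of real numbers such that e^{−t_k(a₁−aₙ)} · exp(t_k B) · A · exp(−t_k B) converges to X in the space of n×n quaternionic matrices. -/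
open Quaternion Matrix

noncomputable section

/-- `n×n` quaternionic matrices. -/
abbrev Mq (n : ℕ) := Matrix (Fin n) (Fin n) ℍ[ℝ]

/-- `sl(n, ℍ)`: matrices whose trace has zero real part. -/
def slSet (n : ℕ) : Set (Mq n) := {X | (Matrix.trace X).re = 0}

/-- matrix exponential of quaternionic matrices -/
noncomputable def mexp {n : ℕ} (X : Mq n) : Mq n := NormedSpace.exp X

open Filter

section Aux

open NormedSpace

/-- The imaginary unit `i` of the quaternions. -/
noncomputable def qI : ℍ[ℝ] := ⟨0,1,0,0⟩

lemma norm_qI : ‖qI‖ = 1 := by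
  rw [norm_eq_sqrt_real_inner, Quaternion.inner_self]
  rw [Quaternion.normSq_def']; simp [qI]

lemma expI_eq (θ : ℝ) : exp (θ • qI) = (↑(Real.cos θ) + Real.sin θ • qI : ℍ[ℝ]) := by
  have hre : (θ • qI).re = 0 := by rw [Quaternion.re_smul]; simp [qI]
  rw [Quaternion.exp_of_re_eq_zero _ hre]
  rw [norm_smul, norm_qI, mul_one, Real.norm_eq_abs, Real.cos_abs]
  congr 1
  rw [smul_smul, div_mul_eq_mul_div]
  congr 1
  rcases eq_or_ne θ 0 with h | h
  · simp [h]
  rcases abs_cases θ with ⟨h1,_⟩|⟨h1,_⟩ <;> rw [h1]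
  · rw [mul_div_assoc, div_self h, mul_one]
  · rw [Real.sin_neg]; field_simp

lemma norm_expI (θ : ℝ) : ‖exp (θ • qI)‖ = 1 := by
  have hre : (θ • qI).re = 0 := by rw [Quaternion.re_smul]; simp [qI]
  rw [Quaternion.norm_exp, hre, exp_zero, norm_one]

lemma expI_add (θ φ : ℝ) : exp ((θ + φ) • qI) = exp (θ • qI) * exp (φ • qI) := by
  let +nondep : NormedAlgebra ℚ ℍ := .restrictScalars ℚ ℝ ℍ
  rw [add_smul]
  exact exp_add_of_commute (((Commute.refl qI).smul_left θ).smul_right φ)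

lemma expI_neg (θ : ℝ) : exp ((-θ) • qI) = (exp (θ • qI))⁻¹ := by
  refine eq_inv_of_mul_eq_one_left ?_
  rw [← expI_add, neg_add_cancel, zero_smul, exp_zero]

lemma dist_expI (x y : ℝ) :
    ‖exp ((x + y) • qI) - exp (y • qI)‖ = ‖exp (x • qI) - 1‖ := by
  rw [expI_add, ← sub_one_mul, norm_mul, norm_expI, mul_one]

lemma rec_lemma (b1 b2 : ℝ) {ε : ℝ} (hε : 0 < ε) (N : ℕ) :
    ∃ q : ℕ, N ≤ q ∧ ‖exp (((q : ℝ) * b1) • qI) - 1‖ < ε ∧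
      ‖exp (((q : ℝ) * b2) • qI) - 1‖ < ε := by
  set T := N + 1 with hT
  set u : ℕ → ℍ[ℝ] × ℍ[ℝ] := fun m =>
    (exp ((((m * T : ℕ) : ℝ) * b1) • qI), exp ((((m * T : ℕ) : ℝ) * b2) • qI)) with hu
  have hmem : ∀ m, u m ∈ Metric.closedBall (0 : ℍ[ℝ] × ℍ[ℝ]) 1 := by
    intro m
    rw [Metric.mem_closedBall, dist_zero_right, Prod.norm_def]
    exact max_le (le_of_eq (norm_expI _)) (le_of_eq (norm_expI _))
  obtain ⟨x, -, φ, hφ, hconv⟩ := tendsto_subseq_of_bounded Metric.isBounded_closedBall hmem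
  have hc := hconv.cauchySeq
  rw [Metric.cauchySeq_iff] at hc
  obtain ⟨M, hM⟩ := hc ε hε
  have hlt : φ M < φ (M + 1) := hφ (Nat.lt_succ_self M)
  have hle : φ M * T ≤ φ (M + 1) * T := Nat.mul_le_mul_right _ hlt.le
  set q : ℕ := φ (M + 1) * T - φ M * T with hq
  have hd := hM (M + 1) (Nat.le_succ M) M le_rfl
  simp only [Function.comp] at hd
  rw [Prod.dist_eq, max_lt_iff] at hd
  obtain ⟨hd1, hd2⟩ := hd
  have gen : ∀ c : ℝ,
      dist (exp ((((φ (M+1) * T : ℕ) : ℝ) * c) • qI)) (exp ((((φ M * T : ℕ) : ℝ) * c) • qI)) < ε →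
      ‖exp (((q : ℝ) * c) • qI) - 1‖ < ε := by
    intro c h
    have hx : ((q : ℕ) : ℝ) * c + ((φ M * T : ℕ) : ℝ) * c = ((φ (M+1) * T : ℕ) : ℝ) * c := by
      rw [hq, Nat.cast_sub hle]; ring
    rw [← dist_expI ((q : ℝ) * c) (((φ M * T : ℕ) : ℝ) * c), hx, ← dist_eq_norm]
    exact h
  refine ⟨q, ?_, gen b1 hd1, gen b2 hd2⟩
  · have h1 : 1 ≤ φ (M + 1) - φ M := by omega
    have h2 : T ≤ (φ (M + 1) - φ M) * T := Nat.le_mul_of_pos_left _ (by omega)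
    have h3 : (φ (M + 1) - φ M) * T = q := by rw [hq, Nat.sub_mul]
    omega

lemma exp_entry (t aa bb : ℝ) (x : ℍ[ℝ]) (hx : x = ⟨aa, bb, 0, 0⟩) :
    exp (t • x) = Real.exp (t * aa) • exp ((t * bb) • qI) := by
  have h1 : t • x = ((t * aa : ℝ) : ℍ[ℝ]) + (t * bb) • qI := by
    ext <;> simp only [Quaternion.re_smul, Quaternion.imI_smul, Quaternion.imJ_smul, Quaternion.imK_smul, Quaternion.re_add, Quaternion.imI_add, Quaternion.imJ_add, Quaternion.imK_add, Quaternion.re_coe, Quaternion.imI_coe, Quaternion.imJ_coe, Quaternion.imK_coe] <;> simp [hx, qI]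
  have hcomm : Commute ((t * aa : ℝ) : ℍ[ℝ]) ((t * bb) • qI) := by
    unfold Commute SemiconjBy
    rw [Quaternion.coe_mul_eq_smul, Quaternion.mul_coe_eq_smul]
  let +nondep : NormedAlgebra ℚ ℍ := .restrictScalars ℚ ℝ ℍ
  rw [h1, exp_add_of_commute hcomm, Quaternion.exp_coe, ← Real.exp_eq_exp_ℝ,
    Quaternion.coe_mul_eq_smul]

lemma conj_entry {n : ℕ} (A : Mq n) (a b : Fin n → ℝ) (t : ℝ)
    (r s : Fin n) :
    (mexp (t • Matrix.diagonal fun r => (⟨a r, b r, 0, 0⟩ : ℍ[ℝ])) * A *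
      mexp (-(t • Matrix.diagonal fun r => (⟨a r, b r, 0, 0⟩ : ℍ[ℝ])))) r s
    = (Real.exp (t * a r) * Real.exp (-t * a s)) •
        (exp ((t * b r) • qI) * A r s * exp ((-t * b s) • qI)) := by
  have h1 : (t • Matrix.diagonal fun r => (⟨a r, b r, 0, 0⟩ : ℍ[ℝ]))
      = (Matrix.diagonal (fun r => t • (@id ℍ[ℝ] ⟨a r, b r, 0, 0⟩)) : Matrix (Fin n) (Fin n) ℍ[ℝ]) := by
    rw [← Matrix.diagonal_smul]; rfl
  have h2 : (-(t • Matrix.diagonal fun r => (⟨a r, b r, 0, 0⟩ : ℍ[ℝ])))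
      = (Matrix.diagonal (fun r => (-t) • (@id ℍ[ℝ] ⟨a r, b r, 0, 0⟩)) : Matrix (Fin n) (Fin n) ℍ[ℝ]) := by
    rw [← neg_smul, ← Matrix.diagonal_smul]; rfl
  rw [h2, h1]
  unfold mexp
  rw [Matrix.exp_diagonal, Matrix.exp_diagonal]
  rw [Matrix.mul_diagonal, Matrix.diagonal_mul]
  let +nondep : NormedAlgebra ℚ ℍ := .restrictScalars ℚ ℝ ℍ
  have hev : ∀ (v : Fin n → ℍ[ℝ]) (i : Fin n), exp v i = exp (v i) := fun v i =>
    map_exp (Pi.evalRingHom _ i) (continuous_apply i) v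
  rw [hev, hev, exp_entry t (a r) (b r) (@id ℍ[ℝ] ⟨a r, b r, 0, 0⟩) rfl,
    exp_entry (-t) (a s) (b s) (@id ℍ[ℝ] ⟨a s, b s, 0, 0⟩) rfl]
  rw [smul_mul_assoc, smul_mul_assoc, mul_smul_comm, smul_smul]

end Aux

/-- if `B = diag (a₁ + i b₁, …, aₙ + i bₙ)` with `a₁ > a₂ ≥ ⋯ ≥ a_{n-1} > aₙ`,
then along a suitable sequence `t_k → +∞` the matrices
`e^{-t_k (a₁ - aₙ)} exp(t_k B) A exp(-t_k B)` converge to `X = p E_{1n}`, where `p` is the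
`(1,n)` entry of `A`. -/
theorem stmt11 (n : ℕ) (hn : 2 ≤ n) (A B : Mq n)
    (hA : A ∈ slSet n) (hB : B ∈ slSet n)
    (a b : Fin n → ℝ)
    (hBdiag : B = Matrix.diagonal fun r => (⟨a r, b r, 0, 0⟩ : ℍ[ℝ]))
    (ha1 : a ⟨0, by omega⟩ > a ⟨1, by omega⟩)
    (hamono : ∀ r s : Fin n, r ≤ s → a s ≤ a r)
    (han : a ⟨n - 2, by omega⟩ > a ⟨n - 1, by omega⟩) :
    ∃ t : ℕ → ℝ, Tendsto t atTop atTop ∧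
      Tendsto
        (fun k => Real.exp (-(t k) * (a ⟨0, by omega⟩ - a ⟨n - 1, by omega⟩)) •
          (mexp ((t k) • B) * A * mexp (-((t k) • B))))
        atTop
        (nhds (Matrix.single ⟨0, by omega⟩ ⟨n - 1, by omega⟩
          (A ⟨0, by omega⟩ ⟨n - 1, by omega⟩))) := by
  subst hBdiag
  generalize h0 : (⟨0, by omega⟩ : Fin n) = i0
  generalize h1 : (⟨n - 1, by omega⟩ : Fin n) = i1
  have hv0 : (i0 : ℕ) = 0 := by rw [← h0]
  have hv1 : (i1 : ℕ) = n - 1 := by rw [← h1]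
  have hA1 : a i0 > a ⟨1, by omega⟩ := by rw [← h0]; exact ha1
  have hAn : a ⟨n - 2, by omega⟩ > a i1 := by rw [← h1]; exact han
  have hex : ∀ k : ℕ, ∃ q : ℕ, k ≤ q ∧
      ‖NormedSpace.exp (((q : ℝ) * b i0) • qI) - 1‖ < 1 / (k + 1) ∧
      ‖NormedSpace.exp (((q : ℝ) * b i1) • qI) - 1‖ < 1 / (k + 1) :=
    fun k => rec_lemma _ _ (by positivity) k
  choose q hq1 hq2 hq3 using hex
  have htq : Tendsto (fun k => ((q k : ℕ) : ℝ)) atTop atTop :=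
    tendsto_atTop_mono (fun k => Nat.cast_le.2 (hq1 k)) tendsto_natCast_atTop_atTop
  refine ⟨fun k => (q k : ℝ), htq, ?_⟩
  have hb0 : Tendsto (fun k => NormedSpace.exp ((((q k : ℕ) : ℝ) * b i0) • qI)) atTop (nhds 1) := by
    rw [tendsto_iff_norm_sub_tendsto_zero]
    exact squeeze_zero (fun k => norm_nonneg _) (fun k => (hq2 k).le)
      tendsto_one_div_add_atTop_nhds_zero_nat
  have hb1 : Tendsto (fun k => NormedSpace.exp ((((q k : ℕ) : ℝ) * b i1) • qI)) atTop (nhds 1) := by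
    rw [tendsto_iff_norm_sub_tendsto_zero]
    exact squeeze_zero (fun k => norm_nonneg _) (fun k => (hq3 k).le)
      tendsto_one_div_add_atTop_nhds_zero_nat
  have hb1' : Tendsto (fun k => NormedSpace.exp ((-(((q k : ℕ) : ℝ) * b i1)) • qI)) atTop (nhds 1) := by
    have h := hb1.inv₀ one_ne_zero
    rw [inv_one] at h
    refine h.congr fun k => ?_
    rw [← expI_neg]
  refine tendsto_pi_nhds.2 ?_
  intro r
  refine tendsto_pi_nhds.2 ?_
  intro s
  have key : ∀ u v : ℝ,
      (Real.exp (-u * v) •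
        (mexp (u • Matrix.diagonal fun r => (⟨a r, b r, 0, 0⟩ : ℍ[ℝ])) * A *
          mexp (-(u • Matrix.diagonal fun r => (⟨a r, b r, 0, 0⟩ : ℍ[ℝ]))))) r s
      = Real.exp (u * ((a r - a s) - v)) •
          (NormedSpace.exp ((u * b r) • qI) * A r s * NormedSpace.exp ((-(u * b s)) • qI)) := by
    intro u v
    rw [Matrix.smul_apply, conj_entry A a b u r s, smul_smul, ← Real.exp_add, ← Real.exp_add,
      show -u * v + (u * a r + -u * a s) = u * ((a r - a s) - v) from by ring, neg_mul]
  refine Tendsto.congr (fun k => (key ((q k : ℕ) : ℝ) (a i0 - a i1)).symm) ?_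
  by_cases hpos : r = i0 ∧ s = i1
  · obtain ⟨rfl, rfl⟩ := hpos
    rw [Matrix.single_apply_same]
    simp only [sub_self, mul_zero, Real.exp_zero, one_smul]
    have h := (hb0.mul (tendsto_const_nhds (x := A r s))).mul hb1'
    rw [one_mul, mul_one] at h
    exact h
  · have hne : ¬(i0 = r ∧ i1 = s) := fun ⟨e1, e2⟩ => hpos ⟨e1.symm, e2.symm⟩
    rw [Matrix.single_apply_of_ne _ _ _ _ _ hne]
    have hc : (a r - a s) - (a i0 - a i1) < 0 := by
      have h0r : a r ≤ a i0 := hamono i0 r (by rw [Fin.le_def]; omega)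
      have h1s : a i1 ≤ a s := hamono s i1 (by rw [Fin.le_def]; have := s.isLt; omega)
      rcases not_and_or.mp hpos with hr | hs
      · have hrv : (r : ℕ) ≠ 0 := fun h => hr (Fin.ext (by rw [h, hv0]))
        have hle : (⟨1, by omega⟩ : Fin n) ≤ r := by rw [Fin.le_def]; simp; omega
        have := hamono _ r hle
        linarith
      · have hsv : (s : ℕ) ≠ n - 1 := fun h => hs (Fin.ext (by rw [h, hv1]))
        have hle : s ≤ (⟨n - 2, by omega⟩ : Fin n) := by
          rw [Fin.le_def]; have := s.isLt; simp; omega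
        have := hamono s _ hle
        linarith
    have hnorm : ∀ k : ℕ,
        ‖Real.exp (((q k : ℕ) : ℝ) * ((a r - a s) - (a i0 - a i1))) •
          (NormedSpace.exp ((((q k : ℕ) : ℝ) * b r) • qI) * A r s *
            NormedSpace.exp ((-(((q k : ℕ) : ℝ) * b s)) • qI))‖
        = Real.exp (((q k : ℕ) : ℝ) * ((a r - a s) - (a i0 - a i1))) * ‖A r s‖ := by
      intro k
      rw [norm_smul, Real.norm_eq_abs, abs_of_pos (Real.exp_pos _), norm_mul, norm_mul,
        norm_expI, norm_expI, one_mul, mul_one]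
    have hg : Tendsto (fun k => Real.exp (((q k : ℕ) : ℝ) * ((a r - a s) - (a i0 - a i1))) * ‖A r s‖)
        atTop (nhds 0) := by
      have h1 : Tendsto (fun k => ((q k : ℕ) : ℝ) * ((a r - a s) - (a i0 - a i1))) atTop atBot :=
        Tendsto.atTop_mul_const_of_neg hc htq
      have h2 := Real.tendsto_exp_atBot.comp h1
      simpa using h2.mul_const ‖A r s‖
    exact squeeze_zero_norm (fun k => (hnorm k).le) hg
end
end
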